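/- Let m12 ≥ 1 and let k1, k2 be integers with 0 ≤ k2 ≤ k1 < m12; set n1 = 2·m12 − k1 and n2 = 2·m12 − k2. Then TNS(2,m12,2; 2,n1,n2) equals the Euclidean closure of the set of tensors T : Fin 2 → Fin n1 → Fin n2 → ℂ for which there exist linearly independent vectors α = (α0,α1) and β = (β0,β1) in ℂ² with rank(α0 • T 0 + α1 • T 1) ≤ m12 and rank(β0 • T 0 + β1 • T 1) ≤ m12 (i.e. the projective line of matrices spanned by the two slices of T meets the determinantal variety of matrices of rank at most m12 in at least two distinct points). -/

import Mathlib

open scoped BigOperators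

noncomputable section

/-- Parametrized triangle tensor network tensors. -/
def tnsSet (m01 m12 m02 n0 n1 n2 : ℕ) :
    Set (Fin n0 → Fin n1 → Fin n2 → ℂ) :=
  {T | ∃ (X0 : Fin n0 → Fin m01 × Fin m02 → ℂ)
        (X1 : Fin n1 → Fin m01 × Fin m12 → ℂ)
        (X2 : Fin n2 → Fin m12 × Fin m02 → ℂ),
      ∀ a b c, T a b c =
        ∑ i : Fin m01, ∑ j : Fin m12, ∑ k : Fin m02,
          X0 a (i, k) * X1 b (i, j) * X2 c (j, k)}

/-- The triangle tensor network variety: Euclidean closure of the parametrized set. -/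
def TNS (m01 m12 m02 n0 n1 n2 : ℕ) : Set (Fin n0 → Fin n1 → Fin n2 → ℂ) :=
  closure (tnsSet m01 m12 m02 n0 n1 n2)

/-- The vanishing ideal of a subset of an affine space over ℂ. -/
def vanishingIdeal' {ι : Type*} (Z : Set (ι → ℂ)) : Ideal (MvPolynomial ι ℂ) where
  carrier := {p | ∀ z ∈ Z, MvPolynomial.eval z p = 0}
  zero_mem' := by intro z _; simp
  add_mem' := by
    intro a b ha hb z hz
    simp [map_add, ha z hz, hb z hz]
  smul_mem' := by
    intro c a ha z hz
    simp [smul_eq_mul, ha z hz]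

/-- Affine dimension of a set of coordinate tensors. -/
def affineDim {n0 n1 n2 : ℕ} (Z : Set (Fin n0 → Fin n1 → Fin n2 → ℂ)) : WithBot ℕ∞ :=
  ringKrullDim (MvPolynomial (Fin n0 × Fin n1 × Fin n2) ℂ ⧸
    vanishingIdeal' ((fun T (p : Fin n0 × Fin n1 × Fin n2) => T p.1 p.2.1 p.2.2) '' Z))

open Topology Filter

set_option maxHeartbeats 1000000

/-! ### Auxiliary lemmas -/

/-- Rank factorization: a matrix of rank at most `r` factors through `ℂ^r`. -/
lemma rank_factor' {n m : ℕ} (r : ℕ) (M : Matrix (Fin n) (Fin m) ℂ) (h : M.rank ≤ r) :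
    ∃ (A : Matrix (Fin n) (Fin r) ℂ) (B : Matrix (Fin r) (Fin m) ℂ), M = A * B := by
  classical
  set V := LinearMap.range M.mulVecLin with hV
  set d := Module.finrank ℂ V with hdd
  have hdr : d ≤ r := h
  let basis : Module.Basis (Fin d) ℂ V := Module.finBasis ℂ V
  have memV : ∀ c, (fun b => M b c) ∈ V := by
    intro c
    exact ⟨Pi.single c 1, by ext b; simp [Matrix.mulVecLin_apply, Matrix.mulVec_single]⟩
  let col : Fin m → V := fun c => ⟨fun b => M b c, memV c⟩
  refine ⟨fun b j => if h : (j : ℕ) < d then ((basis ⟨j, h⟩ : V) : Fin n → ℂ) b else 0,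
    fun j c => if h : (j : ℕ) < d then basis.repr (col c) ⟨j, h⟩ else 0, ?_⟩
  ext b c
  set g : ℕ → ℂ := fun i =>
    if h : i < d then ((basis ⟨i, h⟩ : V) : Fin n → ℂ) b * basis.repr (col c) ⟨i, h⟩ else 0
    with hg
  have hsum := congrArg (Submodule.subtype V) (basis.sum_repr (col c))
  simp only [map_sum, LinearMap.map_smul, Submodule.subtype_apply] at hsum
  have hsumb := congrFun hsum b
  simp only [Finset.sum_apply, Pi.smul_apply, smul_eq_mul] at hsumb
  calc M b c = (col c : Fin n → ℂ) b := rfl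
    _ = ∑ i : Fin d, basis.repr (col c) i * ((basis i : V) : Fin n → ℂ) b := hsumb.symm
    _ = ∑ i : Fin d, g ↑i := by
        refine Finset.sum_congr rfl fun i _ => ?_
        rw [hg]; simp only [i.isLt, dif_pos, Fin.eta]; ring
    _ = ∑ i ∈ Finset.range d, g i := Fin.sum_univ_eq_sum_range g d
    _ = ∑ i ∈ Finset.range r, g i := by
        refine Finset.sum_subset (Finset.range_subset_range.mpr hdr) fun i _ hi => ?_
        rw [hg]; simp [Finset.mem_range] at hi ⊢; omega
    _ = ∑ j : Fin r, g ↑j := (Fin.sum_univ_eq_sum_range g r).symm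
    _ = _ := by
        show _ = ∑ j : Fin r, (if h : (j : ℕ) < d then ((basis ⟨j, h⟩ : V) : Fin n → ℂ) b else 0) *
          (if h : (j : ℕ) < d then basis.repr (col c) ⟨j, h⟩ else 0)
        refine Finset.sum_congr rfl fun j _ => ?_
        rw [hg]
        by_cases hj : (j : ℕ) < d <;> simp [hj]

/-- A singular 2×2 matrix is an outer product. -/
lemma entry_factor' (Y : Fin 2 → Fin 2 → ℂ) (h : Y 0 0 * Y 1 1 = Y 0 1 * Y 1 0) :
    ∃ c d : Fin 2 → ℂ, ∀ i k, Y i k = c i * d k := by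
  by_cases h00 : Y 0 0 = 0
  · by_cases h01 : Y 0 1 = 0
    · exact ⟨![0, 1], ![Y 1 0, Y 1 1], fun i k => by
        fin_cases i <;> fin_cases k <;> simp [h00, h01]⟩
    · have h10 : Y 1 0 = 0 := by
        have h2 : Y 0 1 * Y 1 0 = 0 := by rw [← h, h00]; ring
        rcases mul_eq_zero.mp h2 with h3 | h3
        · exact absurd h3 h01
        · exact h3
      exact ⟨![Y 0 1, Y 1 1], ![0, 1], fun i k => by
        fin_cases i <;> fin_cases k <;> simp [h00, h10]⟩
  · refine ⟨![Y 0 0, Y 1 0], ![1, Y 0 1 / Y 0 0], fun i k => ?_⟩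
    fin_cases i <;> fin_cases k <;> simp
    · field_simp
    · field_simp; linear_combination h

/-- A pencil slice coming from a singular 2×2 coefficient matrix has rank at most `m12`. -/
lemma slice_rank_le' {m12 n1 n2 : ℕ} (Y : Fin 2 → Fin 2 → ℂ)
    (hY : Y 0 0 * Y 1 1 = Y 0 1 * Y 1 0)
    (X1 : Fin n1 → Fin 2 × Fin m12 → ℂ) (X2 : Fin n2 → Fin m12 × Fin 2 → ℂ) :
    (Matrix.of fun b c => ∑ i : Fin 2, ∑ j : Fin m12, ∑ k : Fin 2,
        Y i k * X1 b (i, j) * X2 c (j, k)).rank ≤ m12 := by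
  obtain ⟨c, d, hcd⟩ := entry_factor' Y hY
  have hfac : (Matrix.of fun b c' => ∑ i : Fin 2, ∑ j : Fin m12, ∑ k : Fin 2,
      Y i k * X1 b (i, j) * X2 c' (j, k)) =
      (Matrix.of fun b j => ∑ i : Fin 2, c i * X1 b (i, j)) *
      (Matrix.of fun j c' => ∑ k : Fin 2, d k * X2 c' (j, k)) := by
    ext b c'
    rw [Matrix.mul_apply]
    simp only [Matrix.of_apply, hcd, Finset.sum_mul, Finset.mul_sum]
    rw [Finset.sum_comm]
    refine Finset.sum_congr rfl fun i _ => ?_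
    rw [Finset.sum_comm]
    refine Finset.sum_congr rfl fun k _ => Finset.sum_congr rfl fun j _ => ?_
    ring
  rw [hfac]
  calc ((Matrix.of fun b j => ∑ i : Fin 2, c i * X1 b (i, j)) *
      (Matrix.of fun j c' => ∑ k : Fin 2, d k * X2 c' (j, k))).rank
      ≤ (Matrix.of fun b j => ∑ i : Fin 2, c i * X1 b (i, j)).rank :=
        Matrix.rank_mul_le_left _ _
    _ ≤ Fintype.card (Fin m12) := Matrix.rank_le_card_width _
    _ = m12 := Fintype.card_fin m12

lemma li_of_det' (α β : Fin 2 → ℂ) (h : α 0 * β 1 - α 1 * β 0 ≠ 0) :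
    LinearIndependent ℂ ![α, β] := by
  have hu : IsUnit (Matrix.of ![α, β]) := by
    rw [Matrix.isUnit_iff_isUnit_det, Matrix.det_fin_two, isUnit_iff_ne_zero]
    simpa using h
  exact Matrix.linearIndependent_rows_iff_isUnit.mpr hu

/-- A binary quadratic with nonzero discriminant has two independent roots. -/
lemma quad_roots' (a b c : ℂ) (hd : b ^ 2 - 4 * (a * c) ≠ 0) :
    ∃ α β : Fin 2 → ℂ, LinearIndependent ℂ ![α, β] ∧
      a * α 0 ^ 2 + b * (α 0 * α 1) + c * α 1 ^ 2 = 0 ∧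
      a * β 0 ^ 2 + b * (β 0 * β 1) + c * β 1 ^ 2 = 0 := by
  by_cases ha : a = 0
  · have hb : b ≠ 0 := by
      intro hb; apply hd; rw [ha, hb]; ring
    refine ⟨![1, 0], ![c, -b], li_of_det' _ _ ?_, ?_, ?_⟩
    · simpa using hb
    · simp [ha]
    · simp only [Matrix.cons_val_zero, Matrix.cons_val_one, Matrix.head_cons]
      rw [ha]; ring
  · obtain ⟨rt, hrt⟩ := IsAlgClosed.exists_pow_nat_eq (b ^ 2 - 4 * (a * c)) (n := 2) (by norm_num)
    have hrt0 : rt ≠ 0 := by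
      intro h0; apply hd; rw [← hrt, h0]; ring
    refine ⟨![-b + rt, 2 * a], ![-b - rt, 2 * a], li_of_det' _ _ ?_, ?_, ?_⟩
    · simp only [Matrix.cons_val_zero, Matrix.cons_val_one, Matrix.head_cons]
      have : (-b + rt) * (2 * a) - 2 * a * (-b - rt) = 2 * (2 * (a * rt)) := by ring
      rw [this]
      exact mul_ne_zero two_ne_zero (mul_ne_zero two_ne_zero (mul_ne_zero ha hrt0))
    · simp only [Matrix.cons_val_zero, Matrix.cons_val_one, Matrix.head_cons]
      linear_combination a * hrt
    · simp only [Matrix.cons_val_zero, Matrix.cons_val_one, Matrix.head_cons]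
      linear_combination a * hrt

/-- 2×2 determinant of an array. -/
def det2' (f : Fin 2 → Fin 2 → ℂ) : ℂ := f 0 0 * f 1 1 - f 0 1 * f 1 0
def qA' (X0 : Fin 2 → Fin 2 × Fin 2 → ℂ) : ℂ := det2' fun i k => X0 0 (i, k)
def qC' (X0 : Fin 2 → Fin 2 × Fin 2 → ℂ) : ℂ := det2' fun i k => X0 1 (i, k)
def qB' (X0 : Fin 2 → Fin 2 × Fin 2 → ℂ) : ℂ :=
  det2' (fun i k => X0 0 (i, k) + X0 1 (i, k)) - qA' X0 - qC' X0
def disc' (X0 : Fin 2 → Fin 2 × Fin 2 → ℂ) : ℂ := qB' X0 ^ 2 - 4 * (qA' X0 * qC' X0)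

lemma combo_rank_le {m12 n1 n2 : ℕ} (X0 : Fin 2 → Fin 2 × Fin 2 → ℂ)
    (X1 : Fin n1 → Fin 2 × Fin m12 → ℂ) (X2 : Fin n2 → Fin m12 × Fin 2 → ℂ)
    (T : Fin 2 → Fin n1 → Fin n2 → ℂ)
    (hT : ∀ a b c, T a b c = ∑ i : Fin 2, ∑ j : Fin m12, ∑ k : Fin 2,
        X0 a (i, k) * X1 b (i, j) * X2 c (j, k))
    (γ : Fin 2 → ℂ)
    (hq : qA' X0 * γ 0 ^ 2 + qB' X0 * (γ 0 * γ 1) + qC' X0 * γ 1 ^ 2 = 0) :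
    (γ 0 • Matrix.of (T 0) + γ 1 • Matrix.of (T 1)).rank ≤ m12 := by
  simp only [qA', qB', qC', det2'] at hq
  have hY : (γ 0 * X0 0 (0, 0) + γ 1 * X0 1 (0, 0)) * (γ 0 * X0 0 (1, 1) + γ 1 * X0 1 (1, 1)) =
      (γ 0 * X0 0 (0, 1) + γ 1 * X0 1 (0, 1)) * (γ 0 * X0 0 (1, 0) + γ 1 * X0 1 (1, 0)) := by
    linear_combination hq
  have hmat : γ 0 • Matrix.of (T 0) + γ 1 • Matrix.of (T 1) =
      Matrix.of (fun b c => ∑ i : Fin 2, ∑ j : Fin m12, ∑ k : Fin 2,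
        (fun i k => γ 0 * X0 0 (i, k) + γ 1 * X0 1 (i, k)) i k * X1 b (i, j) * X2 c (j, k)) := by
    ext b c
    simp only [Matrix.add_apply, Matrix.smul_apply, Matrix.of_apply, smul_eq_mul, hT,
      Finset.mul_sum]
    rw [← Finset.sum_add_distrib]
    refine Finset.sum_congr rfl fun i _ => ?_
    rw [← Finset.sum_add_distrib]
    refine Finset.sum_congr rfl fun j _ => ?_
    rw [← Finset.sum_add_distrib]
    refine Finset.sum_congr rfl fun k _ => ?_
    ring
  rw [hmat]
  exact slice_rank_le' _ hY X1 X2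

lemma pencil_mem {m12 n1 n2 : ℕ} (X0 : Fin 2 → Fin 2 × Fin 2 → ℂ)
    (X1 : Fin n1 → Fin 2 × Fin m12 → ℂ) (X2 : Fin n2 → Fin m12 × Fin 2 → ℂ)
    (T : Fin 2 → Fin n1 → Fin n2 → ℂ)
    (hT : ∀ a b c, T a b c = ∑ i : Fin 2, ∑ j : Fin m12, ∑ k : Fin 2,
        X0 a (i, k) * X1 b (i, j) * X2 c (j, k))
    (hd : disc' X0 ≠ 0) :
    ∃ α β : Fin 2 → ℂ, LinearIndependent ℂ ![α, β] ∧
      (α 0 • Matrix.of (T 0) + α 1 • Matrix.of (T 1)).rank ≤ m12 ∧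
      (β 0 • Matrix.of (T 0) + β 1 • Matrix.of (T 1)).rank ≤ m12 := by
  obtain ⟨α, β, hli, hqa, hqb⟩ := quad_roots' (qA' X0) (qB' X0) (qC' X0) hd
  exact ⟨α, β, hli, combo_rank_le X0 X1 X2 T hT α hqa, combo_rank_le X0 X1 X2 T hT β hqb⟩

/-- the good target pair: (identity, diag(1,2)), which has discriminant 1 -/
def Egood : Fin 2 → Fin 2 × Fin 2 → ℂ := fun a p =>
  if p.1 = p.2 then (if a = 0 then 1 else if p.1 = 0 then 1 else 2) else 0

def Xpath (X0 : Fin 2 → Fin 2 × Fin 2 → ℂ) (t : ℂ) : Fin 2 → Fin 2 × Fin 2 → ℂ :=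
  fun a p => X0 a p + t * (Egood a p - X0 a p)

/-- Geometric characterization of the triangle tensor network variety with bond
dimensions `(2,m12,2)`: it is the closure of the set of pencils whose projective line
of matrices meets the rank-≤-m12 determinantal variety in at least two distinct points. -/
theorem tns_two_rank_drops (m12 k1 k2 n1 n2 : ℕ) (hm12 : 1 ≤ m12)
    (hk21 : k2 ≤ k1) (hk1 : k1 < m12)
    (hn1 : n1 + k1 = 2 * m12) (hn2 : n2 + k2 = 2 * m12) :
    TNS 2 m12 2 2 n1 n2 =
      closure {T : Fin 2 → Fin n1 → Fin n2 → ℂ |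
        ∃ α β : Fin 2 → ℂ,
          LinearIndependent ℂ ![α, β] ∧
          (α 0 • Matrix.of (T 0) + α 1 • Matrix.of (T 1)).rank ≤ m12 ∧
          (β 0 • Matrix.of (T 0) + β 1 • Matrix.of (T 1)).rank ≤ m12} := by
  set S : Set (Fin 2 → Fin n1 → Fin n2 → ℂ) :=
    {T | ∃ α β : Fin 2 → ℂ,
      LinearIndependent ℂ ![α, β] ∧
      (α 0 • Matrix.of (T 0) + α 1 • Matrix.of (T 1)).rank ≤ m12 ∧
      (β 0 • Matrix.of (T 0) + β 1 • Matrix.of (T 1)).rank ≤ m12} with hS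
  have hsub1 : tnsSet 2 m12 2 2 n1 n2 ⊆ closure S := by
    rintro T ⟨X0, X1, X2, hT⟩
    have hT0 : (fun a b c => ∑ i : Fin 2, ∑ j : Fin m12, ∑ k : Fin 2,
        Xpath X0 0 a (i, k) * X1 b (i, j) * X2 c (j, k)) = T := by
      funext a b c
      rw [hT a b c]
      simp [Xpath]
    have hd1 : disc' (Xpath X0 1) = 1 := by
      simp [disc', qA', qB', qC', det2', Xpath, Egood]
      norm_num
    have hdiff : Differentiable ℂ (fun t => disc' (Xpath X0 t)) := by
      simp only [disc', qA', qB', qC', det2', Xpath]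
      fun_prop
    rcases (hdiff.analyticAt 0).eventually_eq_zero_or_eventually_ne_zero with hcase | hcase
    · exfalso
      have hzero : Set.EqOn (fun t => disc' (Xpath X0 t)) 0 Set.univ :=
        AnalyticOnNhd.eqOn_zero_of_preconnected_of_eventuallyEq_zero
          (fun z _ => hdiff.analyticAt z) isPreconnected_univ (Set.mem_univ 0) hcase
      have h10 : disc' (Xpath X0 1) = 0 := hzero (Set.mem_univ 1)
      rw [hd1] at h10
      exact one_ne_zero h10
    · haveI : (𝓝[≠] (0 : ℂ)).NeBot := Module.punctured_nhds_neBot ℂ ℂ 0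
      have hcont : Continuous (fun t : ℂ => fun a b c => ∑ i : Fin 2, ∑ j : Fin m12, ∑ k : Fin 2,
          Xpath X0 t a (i, k) * X1 b (i, j) * X2 c (j, k)) := by
        apply continuous_pi; intro a; apply continuous_pi; intro b; apply continuous_pi; intro c
        simp only [Xpath]
        fun_prop
      have htend : Filter.Tendsto (fun t : ℂ => fun a b c => ∑ i : Fin 2, ∑ j : Fin m12,
          ∑ k : Fin 2, Xpath X0 t a (i, k) * X1 b (i, j) * X2 c (j, k)) (𝓝[≠] (0 : ℂ)) (𝓝 T) := by
        have := (hcont.tendsto 0).mono_left (nhdsWithin_le_nhds (s := {(0 : ℂ)}ᶜ))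
        rwa [hT0] at this
      refine mem_closure_of_tendsto htend ?_
      filter_upwards [hcase] with t ht
      exact pencil_mem (Xpath X0 t) X1 X2
        (fun a b c => ∑ i : Fin 2, ∑ j : Fin m12, ∑ k : Fin 2,
            Xpath X0 t a (i, k) * X1 b (i, j) * X2 c (j, k)) (fun a b c => rfl) ht
  have hsub2 : S ⊆ tnsSet 2 m12 2 2 n1 n2 := by
    rintro T ⟨α, β, hli, h1, h2⟩
    set G : Matrix (Fin 2) (Fin 2) ℂ := Matrix.of ![α, β] with hGdef
    have hu : IsUnit G := Matrix.linearIndependent_rows_iff_isUnit.mp hli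
    have hinv : G⁻¹ * G = 1 := Matrix.nonsing_inv_mul G ((Matrix.isUnit_iff_isUnit_det G).mp hu)
    obtain ⟨A0, B0, hAB0⟩ := rank_factor' m12 _ h1
    obtain ⟨A1, B1, hAB1⟩ := rank_factor' m12 _ h2
    refine ⟨fun a p => if p.1 = p.2 then G⁻¹ a p.1 else 0,
        fun b p => if p.1 = 0 then A0 b p.2 else A1 b p.2,
        fun c p => if p.2 = 0 then B0 p.1 c else B1 p.1 c, ?_⟩
    intro a b c
    have e0 : (1 : Matrix (Fin 2) (Fin 2) ℂ) a 0 = G⁻¹ a 0 * α 0 + G⁻¹ a 1 * β 0 := by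
      rw [← hinv, Matrix.mul_apply, Fin.sum_univ_two]
      simp [hGdef]
    have e1 : (1 : Matrix (Fin 2) (Fin 2) ℂ) a 1 = G⁻¹ a 0 * α 1 + G⁻¹ a 1 * β 1 := by
      rw [← hinv, Matrix.mul_apply, Fin.sum_univ_two]
      simp [hGdef]
    have hM0 : α 0 * T 0 b c + α 1 * T 1 b c = ∑ j : Fin m12, A0 b j * B0 j c := by
      have := congrFun (congrFun hAB0 b) c
      simpa [Matrix.mul_apply, Matrix.add_apply, Matrix.smul_apply, smul_eq_mul] using this
    have hM1 : β 0 * T 0 b c + β 1 * T 1 b c = ∑ j : Fin m12, A1 b j * B1 j c := by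
      have := congrFun (congrFun hAB1 b) c
      simpa [Matrix.mul_apply, Matrix.add_apply, Matrix.smul_apply, smul_eq_mul] using this
    have hTa : T a b c = (1 : Matrix (Fin 2) (Fin 2) ℂ) a 0 * T 0 b c +
        (1 : Matrix (Fin 2) (Fin 2) ℂ) a 1 * T 1 b c := by
      fin_cases a <;> simp [Matrix.one_apply]
    calc T a b c
        = (1 : Matrix (Fin 2) (Fin 2) ℂ) a 0 * T 0 b c +
          (1 : Matrix (Fin 2) (Fin 2) ℂ) a 1 * T 1 b c := hTa
      _ = G⁻¹ a 0 * (α 0 * T 0 b c + α 1 * T 1 b c) +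
          G⁻¹ a 1 * (β 0 * T 0 b c + β 1 * T 1 b c) := by
          rw [e0, e1]; ring
      _ = G⁻¹ a 0 * (∑ j : Fin m12, A0 b j * B0 j c) +
          G⁻¹ a 1 * (∑ j : Fin m12, A1 b j * B1 j c) := by rw [hM0, hM1]
      _ = _ := by
          symm
          simp only [Fin.sum_univ_two]
          norm_num
          rw [Finset.mul_sum, Finset.mul_sum]
          congr 1 <;> exact Finset.sum_congr rfl fun j _ => by ring
  apply Set.Subset.antisymm
  · exact closure_minimal hsub1 isClosed_closure
  · exact closure_mono hsub2
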